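/- Let f : (0,∞) → ℝ be non-decreasing and concave, p̂ ∈ Δ(V) with p̂_1 ≥ … ≥ p̂_d > 0, and 0 < ε < p̂_d with Σ_{i=1}^{d−1} (f(p̂_i) − f(p̂_d + ε)) / g⁻(p̂_i) ≥ 1, where g⁻(x) = f(x) − f(x − ε) > 0 is assumed for all p̂_i, and g⁺(x) = f(x + ε) − f(x). Set S_I = Σ_{i=1}^{I−1} (f(p̂_i) − f(p̂_I)) / g⁻(p̂_i) and Î = max{I : S_I ≤ 1}. Define q̃ with q̃_i proportional to 1/g⁻(p̂_i) for 1 ≤ i ≤ Î and q̃_i = 0 otherwise (normalized to sum to 1). Then q̃ maximizes the regularized objective: for every q ∈ Δ(V), Σ_i q_i f(p̂_i) − max_{i ≠ j} { q_i g⁻(p̂_i) − q_j g⁺(p̂_j) } ≤ Σ_i q̃_i f(p̂_i) − max_{i ≠ j} { q̃_i g⁻(p̂_i) − q̃_j g⁺(p̂_j) }. -/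

import Mathlib

open Finset
set_option maxHeartbeats 2000000

def simplex (d : ℕ) : Set (Fin d → ℝ) := {p | (∀ i, 0 ≤ p i) ∧ ∑ i, p i = 1}

/-- in the small-budget case, the truncated strategy `q̃`
(proportional to `1/g⁻(p̂_i)` up to `Î`) maximizes the regularized objective. -/
theorem stmt16 {d : ℕ} (hd : 2 ≤ d) (f : ℝ → ℝ)
    (hmono : MonotoneOn f (Set.Ioi 0))
    (hconc : ConcaveOn ℝ (Set.Ioi 0) f)
    (phat : Fin d → ℝ)
    (hmem : phat ∈ simplex d)
    (hpos : ∀ i, 0 < phat i)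
    (hsort : ∀ i j : Fin d, i ≤ j → phat j ≤ phat i)
    (ε : ℝ) (hε : 0 < ε) (hεd : ε < phat ⟨d - 1, by omega⟩)
    (hgap : ∀ i : Fin d, 0 < f (phat i) - f (phat i - ε))
    (hbudget : 1 ≤ ∑ i ∈ univ.filter (· < (⟨d - 1, by omega⟩ : Fin d)),
        (f (phat i) - f (phat ⟨d - 1, by omega⟩ + ε)) / (f (phat i) - f (phat i - ε)))
    (Ihat : Fin d)
    (hIhat_cond : (∑ i ∈ univ.filter (· < Ihat),
        (f (phat i) - f (phat Ihat)) / (f (phat i) - f (phat i - ε))) ≤ 1)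
    (hIhat_max : ∀ I : Fin d,
        (∑ i ∈ univ.filter (· < I),
          (f (phat i) - f (phat I)) / (f (phat i) - f (phat i - ε))) ≤ 1 →
        I ≤ Ihat)
    (qt : Fin d → ℝ)
    (hqt : ∀ i : Fin d,
        qt i = if i ≤ Ihat then
            (1 / (f (phat i) - f (phat i - ε)))
              / ∑ k ∈ univ.filter (· ≤ Ihat), 1 / (f (phat k) - f (phat k - ε))
          else 0) :
    ∀ q ∈ simplex d,
      (∑ i, q i * f (phat i))
          - sSup {x : ℝ | ∃ i j : Fin d, i ≠ j ∧
              x = q i * (f (phat i) - f (phat i - ε))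
                - q j * (f (phat j + ε) - f (phat j))}
        ≤ (∑ i, qt i * f (phat i))
            - sSup {x : ℝ | ∃ i j : Fin d, i ≠ j ∧
                x = qt i * (f (phat i) - f (phat i - ε))
                  - qt j * (f (phat j + ε) - f (phat j))} := by
  intro q hq
  obtain ⟨hq1, hq2⟩ := hq
  set a : Fin d → ℝ := fun i => f (phat i) - f (phat i - ε) with ha
  set b : Fin d → ℝ := fun i => f (phat i + ε) - f (phat i) with hb
  set fv : Fin d → ℝ := fun i => f (phat i) with hfv
  set j0 : Fin d := ⟨d - 1, by omega⟩ with hj0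
  set T : Finset (Fin d) := univ.filter (· ≤ Ihat) with hT
  set Z : ℝ := ∑ k ∈ T, 1 / a k with hZ
  have hapos : ∀ i, 0 < a i := hgap
  have hane : ∀ i, a i ≠ 0 := fun i => (hapos i).ne'
  have hfle : ∀ i j : Fin d, i ≤ j → fv j ≤ fv i := fun i j h =>
    hmono (Set.mem_Ioi.mpr (hpos j)) (Set.mem_Ioi.mpr (hpos i)) (hsort i j h)
  have hbnn : ∀ i, 0 ≤ b i := fun i => sub_nonneg.mpr
    (hmono (Set.mem_Ioi.mpr (hpos i)) (Set.mem_Ioi.mpr (by have := hpos i; linarith))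
      (by linarith [hε.le]))
  have hIhatT : Ihat ∈ T := by simp [hT]
  have hZpos : 0 < Z := Finset.sum_pos (fun k _ => by have := hapos k; positivity) ⟨Ihat, hIhatT⟩
  set c : ℝ := 1 / Z with hc
  have hcpos : 0 < c := by positivity
  have hqtmem : ∀ k ∈ T, qt k = c / a k := by
    intro k hk
    rw [hqt k, if_pos (by simpa [hT] using hk)]
    rw [hc, div_div, div_div, mul_comm]
  have hqt0 : ∀ k, k ∉ T → qt k = 0 := by
    intro k hk
    rw [hqt k, if_neg (by simpa [hT] using hk)]
  have hqtnn : ∀ k, 0 ≤ qt k := by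
    intro k
    by_cases hk : k ∈ T
    · rw [hqtmem k hk]; exact (div_pos hcpos (hapos k)).le
    · rw [hqt0 k hk]
  have hsum : ∀ x : Fin d → ℝ, ∑ i, qt i * x i = ∑ k ∈ T, (c / a k) * x k := by
    intro x
    rw [← Finset.sum_subset (Finset.subset_univ T)
      (fun k _ hk => by rw [hqt0 k hk, zero_mul])]
    exact Finset.sum_congr rfl fun k hk => by rw [hqtmem k hk]
  have hqtsum : ∑ i, qt i = 1 := by
    have := hsum (fun _ => 1)
    simp only [mul_one] at this
    rw [this]
    rw [Finset.sum_congr rfl (fun k _ => (div_eq_mul_one_div c (a k) ▸ rfl :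
      c / a k = c * (1 / a k))), ← Finset.mul_sum, ← hZ, hc]
    field_simp
  set ν : ℝ := (∑ i, qt i * fv i) - c with hν
  set S : ℝ → ℝ := fun r => ∑ k ∈ T, (fv k - r) / a k with hS
  have hqtS : ∀ r, ∑ i, qt i * (fv i - r) = c * S r := by
    intro r
    rw [hsum (fun i => fv i - r), hS, Finset.mul_sum]
    exact Finset.sum_congr rfl fun k _ => by
      rw [div_mul_eq_mul_div, mul_div_assoc]
  have hSν : ∑ i, qt i * (fv i - ν) = c := by
    have h1 : ∑ i, qt i * (fv i - ν) = (∑ i, qt i * fv i) - ν := by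
      simp only [mul_sub]
      rw [Finset.sum_sub_distrib, ← Finset.sum_mul, hqtsum, one_mul]
    rw [h1, hν]; ring
  have hSν1 : S ν = 1 := by
    have h2 : c * S ν = c * 1 := by rw [mul_one, ← hqtS]; exact hSν
    exact mul_left_cancel₀ hcpos.ne' h2
  have hlin : ∀ r, S r = 1 + (ν - r) * Z := by
    intro r
    have h3 : S r = S ν + (ν - r) * Z := by
      rw [hS, hZ, Finset.mul_sum, ← Finset.sum_add_distrib]
      exact Finset.sum_congr rfl fun k _ => by
        have := hane k; field_simp; ring
    rw [h3, hSν1]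
  have hge : ∀ r, 1 ≤ S r → r ≤ ν := by
    intro r hr; rw [hlin r] at hr; nlinarith
  have hle : ∀ r, S r ≤ 1 → ν ≤ r := by
    intro r hr; rw [hlin r] at hr; nlinarith
  have hgt : ∀ r, 1 < S r → r < ν := by
    intro r hr; rw [hlin r] at hr; nlinarith
  have heqv : ∀ r, S r = 1 → ν = r := by
    intro r hr; rw [hlin r] at hr; nlinarith
  -- decomposition of T
  have hTdec : T = insert Ihat (univ.filter (· < Ihat)) := by
    ext k
    simp only [hT, mem_filter, mem_univ, true_and, mem_insert]
    rw [le_iff_lt_or_eq]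
    tauto
  have hIhatnot : Ihat ∉ univ.filter (· < Ihat) := by simp
  have hcond' : S (fv Ihat) ≤ 1 := by
    have h4 : S (fv Ihat) = ∑ i ∈ univ.filter (· < Ihat), (fv i - fv Ihat) / a i := by
      rw [hS]
      simp only
      rw [hTdec, Finset.sum_insert hIhatnot]
      simp
    rw [h4]
    simp only [hfv, ha]
    exact hIhat_cond
  have hνIhat : ν ≤ fv Ihat := hle _ hcond'
  -- beyond Ihat the values are below ν
  have hC : ∀ k : Fin d, Ihat < k → fv k < ν := by
    intro k hk
    have hkv : (Ihat : ℕ) < (k : ℕ) := hk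
    have hI'lt : (Ihat : ℕ) + 1 < d := by have := k.isLt; omega
    set I' : Fin d := ⟨(Ihat : ℕ) + 1, hI'lt⟩ with hI'
    have hfiltI' : univ.filter (· < I') = T := by
      ext m
      simp only [hT, mem_filter, mem_univ, true_and]
      rw [Fin.lt_def, Fin.le_def]
      simp only [hI']
      omega
    have hnle : ¬ I' ≤ Ihat := by rw [Fin.le_def]; simp [hI']
    have h5 : ¬ ((∑ i ∈ univ.filter (· < I'),
        (f (phat i) - f (phat I')) / (f (phat i) - f (phat i - ε))) ≤ 1) :=
      fun h => hnle (hIhat_max I' h)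
    push_neg at h5
    have h6 : 1 < S (fv I') := by
      have h7 : S (fv I') = ∑ i ∈ univ.filter (· < I'),
          (f (phat i) - f (phat I')) / (f (phat i) - f (phat i - ε)) := by
        rw [hS, hfiltI']
      rw [h7]; exact h5
    have h8 : fv I' < ν := hgt _ h6
    have h9 : fv k ≤ fv I' := hfle I' k (by rw [Fin.le_def]; simp [hI']; omega)
    linarith
  have hij0 : ∀ i : Fin d, i ≤ j0 := by
    intro i; rw [Fin.le_def]; simp only [hj0]; have := i.isLt; omega
  set i0 : Fin d := ⟨0, by omega⟩ with hi0
  have hi0j0 : i0 ≠ j0 := by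
    rw [hi0, hj0, Fin.ne_iff_vne]
    simp; omega
  have hi0T : i0 ∈ T := by
    simp only [hT, mem_filter, mem_univ, true_and]
    rw [Fin.le_def]; simp [hi0]
  have hbudget' : 1 ≤ ∑ i ∈ univ.filter (· < j0), (fv i - f (phat j0 + ε)) / a i := by
    simp only [hj0, hfv, ha]
    exact hbudget
  have hkey : f (phat j0 + ε) ≤ ν ∧ qt j0 * (fv j0 - ν) = 0 ∧ qt j0 * b j0 = 0 := by
    rcases eq_or_lt_of_le (hij0 Ihat) with hcase | hcase
    · -- Ihat = j0
      have hScond : ∑ i ∈ univ.filter (· < j0), (fv i - fv j0) / a i ≤ 1 := by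
        rw [← hcase]
        simp only [hfv, ha]
        exact hIhat_cond
      have hfvβ : fv j0 ≤ f (phat j0 + ε) := by
        have := hbnn j0; rw [hb] at this; simp only at this
        simp only [hfv]; linarith
      have hBS : ∑ i ∈ univ.filter (· < j0), (fv i - f (phat j0 + ε)) / a i
          ≤ ∑ i ∈ univ.filter (· < j0), (fv i - fv j0) / a i := by
        apply Finset.sum_le_sum
        intro i _
        have := hapos i
        gcongr
      have hS0ge : 1 ≤ ∑ i ∈ univ.filter (· < j0), (fv i - fv j0) / a i :=
        le_trans hbudget' hBS
      have hS0eq : ∑ i ∈ univ.filter (· < j0), (fv i - fv j0) / a i = 1 :=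
        le_antisymm hScond hS0ge
      have hBeq : ∑ i ∈ univ.filter (· < j0), (fv i - f (phat j0 + ε)) / a i = 1 :=
        le_antisymm (hBS.trans hScond) hbudget'
      have hzero : ∑ i ∈ univ.filter (· < j0), (f (phat j0 + ε) - fv j0) / a i = 0 := by
        have hds : ∑ i ∈ univ.filter (· < j0),
            ((fv i - fv j0) / a i - (fv i - f (phat j0 + ε)) / a i)
            = ∑ i ∈ univ.filter (· < j0), (f (phat j0 + ε) - fv j0) / a i := by
          apply Finset.sum_congr rfl
          intro i _
          rw [div_sub_div_same]
          ring_nf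
        rw [← hds, Finset.sum_sub_distrib, hS0eq, hBeq]
        ring
      have hi0lt : i0 ∈ univ.filter (· < j0) := by
        simp only [mem_filter, mem_univ, true_and]
        rw [Fin.lt_def]; simp only [hi0, hj0]; omega
      have hterm0 : (f (phat j0 + ε) - fv j0) / a i0 = 0 := by
        have := (Finset.sum_eq_zero_iff_of_nonneg (fun i _ => by
          have := hapos i
          have : 0 ≤ f (phat j0 + ε) - fv j0 := by linarith [hfvβ]
          positivity)).mp hzero i0 hi0lt
        exact this
      have hβeq : f (phat j0 + ε) = fv j0 := by
        rcases div_eq_zero_iff.mp hterm0 with h | h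
        · linarith
        · exact absurd h (hane i0)
      have hSfvj0 : S (fv j0) = 1 := by
        have : S (fv j0) = ∑ i ∈ univ.filter (· < j0), (fv i - fv j0) / a i := by
          rw [hS]
          simp only
          rw [hTdec, hcase, Finset.sum_insert (by simp)]
          simp
        rw [this, hS0eq]
      have hνj0 : ν = fv j0 := heqv _ hSfvj0
      have hbj00 : b j0 = 0 := by
        have h := hβeq
        simp only [hfv] at h
        show f (phat j0 + ε) - f (phat j0) = 0
        linarith
      refine ⟨by linarith, by rw [hνj0]; ring, by rw [hbj00]; ring⟩
    · -- Ihat < j0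
      have hqtj0 : qt j0 = 0 := hqt0 j0 (by
        simp only [hT, mem_filter, mem_univ, true_and]
        exact not_le.mpr hcase)
      refine ⟨?_, by rw [hqtj0]; ring, by rw [hqtj0]; ring⟩
      have hcv : (Ihat : ℕ) < d - 1 := by
        have := hcase
        rw [Fin.lt_def] at this
        simpa [hj0] using this
      have hI2lt : (Ihat : ℕ) + 1 < d := by omega
      set I2 : Fin d := ⟨(Ihat : ℕ) + 1, hI2lt⟩ with hI2
      have hν2 : fv I2 < ν := hC I2 (by rw [Fin.lt_def]; simp [hI2])
      by_cases hββ : f (phat j0 + ε) ≤ fv I2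
      · linarith
      · push_neg at hββ
        have hsubT : T ⊆ univ.filter (· < j0) := by
          intro k hk
          simp only [hT, mem_filter, mem_univ, true_and] at hk ⊢
          exact lt_of_le_of_lt hk hcase
        have hsplit := Finset.sum_sdiff (f := fun i => (fv i - f (phat j0 + ε)) / a i) hsubT
        have hextra : ∑ i ∈ univ.filter (· < j0) \ T,
            (fv i - f (phat j0 + ε)) / a i ≤ 0 := by
          apply Finset.sum_nonpos
          intro i hi
          rw [Finset.mem_sdiff] at hi
          have hiT : ¬ i ≤ Ihat := by
            intro hle'
            exact hi.2 (by simp only [hT, mem_filter, mem_univ, true_and]; exact hle')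
          have hIi : Ihat < i := not_le.mp hiT
          have hI2i : I2 ≤ i := by
            rw [Fin.le_def]; simp only [hI2]
            rw [Fin.lt_def] at hIi; omega
          have hfvi : fv i ≤ fv I2 := hfle I2 i hI2i
          apply div_nonpos_of_nonpos_of_nonneg
          · linarith
          · exact (hapos i).le
        have hSβ : 1 ≤ S (f (phat j0 + ε)) := by
          have hSeq : S (f (phat j0 + ε)) = ∑ i ∈ T, (fv i - f (phat j0 + ε)) / a i := by
            rw [hS]
          rw [hSeq]
          have := hsplit
          linarith [hbudget']
        exact hge _ hSβ
  obtain ⟨hDν, hμj0', hqtbj0⟩ := hkey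
  set μ : Fin d → ℝ := fun k => qt k * (fv k - ν) * Z with hμ
  have hμnn : ∀ k, 0 ≤ μ k := by
    intro k
    simp only [hμ]
    by_cases hk : k ∈ T
    · have h1 : fv Ihat ≤ fv k := hfle k Ihat (by simpa [hT] using hk)
      exact mul_nonneg (mul_nonneg (hqtnn k) (by linarith)) hZpos.le
    · rw [hqt0 k hk, zero_mul, zero_mul]
  have hμsum : ∑ k, μ k = 1 := by
    simp only [hμ]
    rw [← Finset.sum_mul, hSν, hc]
    field_simp
  have hμj0 : μ j0 = 0 := by
    simp only [hμ]
    rw [hμj0', zero_mul]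
  have hh : ∀ k, fv k - μ k * a k + (if k = j0 then b j0 else 0) ≤ ν := by
    intro k
    by_cases hkj : k = j0
    · rw [if_pos hkj, hkj, hμj0, zero_mul, sub_zero]
      have hbe : fv j0 + b j0 = f (phat j0 + ε) := by
        simp only [hb, hfv]; ring
      linarith
    · rw [if_neg hkj, add_zero]
      by_cases hkT : k ∈ T
      · have he : μ k * a k = fv k - ν := by
          simp only [hμ]
          rw [hqtmem k hkT, hc]
          field_simp
          exact mul_div_cancel_left₀ _ (hane k)
        rw [he]; linarith
      · have hμ0 : μ k = 0 := by simp only [hμ]; rw [hqt0 k hkT, zero_mul, zero_mul]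
        rw [hμ0, zero_mul, sub_zero]
        have hIk : Ihat < k := not_le.mp (by simpa [hT] using hkT)
        exact (hC k hIk).le
  have hbdd : ∀ r : Fin d → ℝ,
      BddAbove {x : ℝ | ∃ i j : Fin d, i ≠ j ∧ x = r i * a i - r j * b j} := by
    intro r
    apply Set.Finite.bddAbove
    apply Set.Finite.subset
      (Set.finite_range (fun p : Fin d × Fin d => r p.1 * a p.1 - r p.2 * b p.2))
    rintro x ⟨i, j, hij, rfl⟩
    exact ⟨(i, j), rfl⟩
  have hMq : ∑ k, μ k * (q k * a k - q j0 * b j0)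
      ≤ sSup {x : ℝ | ∃ i j : Fin d, i ≠ j ∧ x = q i * a i - q j * b j} := by
    calc ∑ k, μ k * (q k * a k - q j0 * b j0)
        ≤ ∑ k, μ k * sSup {x : ℝ | ∃ i j : Fin d, i ≠ j ∧ x = q i * a i - q j * b j} := by
          apply Finset.sum_le_sum
          intro k _
          by_cases hkj : k = j0
          · rw [hkj, hμj0, zero_mul, zero_mul]
          · exact mul_le_mul_of_nonneg_left (le_csSup (hbdd q) ⟨k, j0, hkj, rfl⟩) (hμnn k)
      _ = sSup {x : ℝ | ∃ i j : Fin d, i ≠ j ∧ x = q i * a i - q j * b j} := by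
          rw [← Finset.sum_mul, hμsum, one_mul]
  have hMqt : sSup {x : ℝ | ∃ i j : Fin d, i ≠ j ∧ x = qt i * a i - qt j * b j} = c := by
    apply le_antisymm
    · apply Real.sSup_le _ hcpos.le
      rintro x ⟨i, j, hij, rfl⟩
      have h1 : qt i * a i ≤ c := by
        by_cases hiT : i ∈ T
        · rw [hqtmem i hiT, div_mul_cancel₀ _ (hane i)]
        · rw [hqt0 i hiT, zero_mul]; exact hcpos.le
      have h2 : 0 ≤ qt j * b j := mul_nonneg (hqtnn j) (hbnn j)
      linarith
    · apply le_csSup (hbdd qt)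
      refine ⟨i0, j0, hi0j0, ?_⟩
      rw [hqtmem i0 hi0T, div_mul_cancel₀ _ (hane i0), hqtbj0]
      ring
  have hA : ∑ k, μ k * (q k * a k - q j0 * b j0)
      = (∑ k, μ k * (q k * a k)) - q j0 * b j0 := by
    simp only [mul_sub]
    rw [Finset.sum_sub_distrib, ← Finset.sum_mul, hμsum, one_mul]
  have hB : ∑ k, q k * (fv k - μ k * a k + (if k = j0 then b j0 else 0))
      = (∑ k, q k * fv k) - (∑ k, μ k * (q k * a k)) + q j0 * b j0 := by
    have hterm : ∀ k : Fin d, q k * (fv k - μ k * a k + (if k = j0 then b j0 else 0))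
        = (q k * fv k - μ k * (q k * a k)) + (if k = j0 then q k * b j0 else 0) := by
      intro k
      by_cases h : k = j0 <;> simp [h] <;> ring
    rw [Finset.sum_congr rfl (fun k _ => hterm k), Finset.sum_add_distrib,
      Finset.sum_sub_distrib, Finset.sum_ite_eq' univ j0 (fun k => q k * b j0)]
    simp
  have h1 : ∑ k, q k * (fv k - μ k * a k + (if k = j0 then b j0 else 0)) ≤ ν := by
    calc ∑ k, q k * (fv k - μ k * a k + (if k = j0 then b j0 else 0))
        ≤ ∑ k, q k * ν := Finset.sum_le_sum (fun k _ =>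
            mul_le_mul_of_nonneg_left (hh k) (hq1 k))
      _ = ν := by rw [← Finset.sum_mul, hq2, one_mul]
  have hfinal : (∑ i, q i * fv i)
        - sSup {x : ℝ | ∃ i j : Fin d, i ≠ j ∧ x = q i * a i - q j * b j}
      ≤ (∑ i, qt i * fv i)
        - sSup {x : ℝ | ∃ i j : Fin d, i ≠ j ∧ x = qt i * a i - qt j * b j} := by
    rw [hMqt]
    have hνe : ν = (∑ i, qt i * fv i) - c := hν
    linarith
  simp only [ha, hb, hfv] at hfinal
  exact hfinal
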